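/- Let G be an undirected graph on n vertices. If for every symmetric positive semidefinite singular n×n matrix A (i.e. A ≥ 0 and det A = 0) the thresholded matrix A_G is positive semidefinite, then G is a disjoint union of complete components. -/

import Mathlib

def threshold {n : ℕ} (G : SimpleGraph (Fin n)) [DecidableRel G.Adj]
    (A : Matrix (Fin n) (Fin n) ℝ) : Matrix (Fin n) (Fin n) ℝ :=
  Matrix.of fun i j => if i = j ∨ G.Adj i j then A i j else 0

open Matrix

lemma key_adj {n : ℕ} (G : SimpleGraph (Fin n)) [DecidableRel G.Adj]
    (h : ∀ A : Matrix (Fin n) (Fin n) ℝ, A.IsSymm → A.PosSemidef → A.det = 0 →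
      (threshold G A).PosSemidef)
    (a b c : Fin n) (hab : G.Adj a b) (hbc : G.Adj b c) (hac : a ≠ c) : G.Adj a c := by
  by_contra hnac
  have hab' : a ≠ b := hab.ne
  have hbc' : b ≠ c := hbc.ne
  set v : Fin n → ℝ := fun t => if t = a then 1 else if t = b then -1 else if t = c then 1 else 0 with hv
  set A : Matrix (Fin n) (Fin n) ℝ := Matrix.of fun i j => v i * v j with hA
  have hva : v a = 1 := by simp [hv]
  have hvb : v b = -1 := by simp [hv, hab'.symm]
  have hvc : v c = 1 := by simp [hv, hac.symm, hbc'.symm]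
  have hsymm : A.IsSymm := by
    ext i j
    simp [hA, Matrix.transpose_apply, mul_comm]
  have hpsd : A.PosSemidef := by
    refine Matrix.posSemidef_iff_dotProduct_mulVec.mpr ⟨?_, ?_⟩
    · ext i j
      simp [hA, Matrix.conjTranspose_apply, mul_comm]
    · intro x
      have : dotProduct (star x) (A *ᵥ x) = (∑ i, v i * x i) * (∑ i, v i * x i) := by
        simp only [dotProduct, Matrix.mulVec, hA, Matrix.of_apply, star_trivial]
        rw [Finset.sum_mul]
        refine Finset.sum_congr rfl fun i _ => ?_
        rw [Finset.mul_sum, Finset.mul_sum]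
        refine Finset.sum_congr rfl fun j _ => ?_
        ring
      rw [this]
      exact mul_self_nonneg _
  have hdet : A.det = 0 := by
    rw [← Matrix.exists_mulVec_eq_zero_iff]
    refine ⟨fun t => if t = a then 1 else if t = c then -1 else 0, ?_, ?_⟩
    · intro hcon
      have := congrFun hcon a
      simp at this
    · ext i
      have hsplit : ∀ j, A i j * (if j = a then (1:ℝ) else if j = c then -1 else 0)
          = (if j = a then A i a else 0) + (if j = c then -(A i c) else 0) := by
        intro j
        rcases eq_or_ne j a with rfl | h1
        · simp [hac]
        · rcases eq_or_ne j c with rfl | h2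
          · simp [h1]
          · simp [h1, h2]
      simp only [Matrix.mulVec, dotProduct, hsplit]
      rw [Finset.sum_add_distrib, Finset.sum_ite_eq' Finset.univ a,
        Finset.sum_ite_eq' Finset.univ c]
      simp [hA, hva, hvc]
  have hT := h A hsymm hpsd hdet
  set x : Fin n → ℝ := fun t => if t = a ∨ t = b ∨ t = c then 1 else 0 with hx
  have hsum : ∀ f : Fin n → ℝ, (∑ i, x i * f i) = f a + f b + f c := by
    intro f
    have h1 : ∀ i, x i * f i = if i ∈ ({a, b, c} : Finset (Fin n)) then f i else 0 := by
      intro i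
      simp only [hx, Finset.mem_insert, Finset.mem_singleton]
      split_ifs <;> simp_all
    rw [Finset.sum_congr rfl fun i _ => h1 i, Finset.sum_ite_mem, Finset.univ_inter]
    rw [Finset.sum_insert (by simp [hab', hac]), Finset.sum_insert (by simp [hbc']),
      Finset.sum_singleton]
    ring
  have hTval : dotProduct (star x) (threshold G A *ᵥ x) = -1 := by
    have hcol : ∀ i, (threshold G A *ᵥ x) i =
        threshold G A i a + threshold G A i b + threshold G A i c := by
      intro i
      simp only [Matrix.mulVec, dotProduct]
      exact (Finset.sum_congr rfl fun j _ => mul_comm _ _).trans (hsum fun j => threshold G A i j)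
    simp only [dotProduct, star_trivial, ← Finset.sum_mul]
    rw [show (∑ i, x i * (threshold G A *ᵥ x) i) = _ from hsum _]
    rw [hcol a, hcol b, hcol c]
    have hca : ¬ G.Adj c a := fun hh => hnac hh.symm
    simp [threshold, hA, hab, hbc, hab.symm, hbc.symm, hnac, hca, hac, hab', hbc',
      Ne.symm hac, Ne.symm hab', Ne.symm hbc', hva, hvb, hvc]
  have := hT.dotProduct_mulVec_nonneg x
  rw [hTval] at this
  linarith

theorem stmt_3 {n : ℕ} (G : SimpleGraph (Fin n)) [DecidableRel G.Adj]
    (h : ∀ A : Matrix (Fin n) (Fin n) ℝ, A.IsSymm → A.PosSemidef → A.det = 0 →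
      (threshold G A).PosSemidef) :
    ∀ i j : Fin n, i ≠ j → G.Reachable i j → G.Adj i j := by
  intro i j hij hreach
  obtain ⟨w⟩ := hreach
  have main : ∀ {u v : Fin n} (_ : G.Walk u v), u = v ∨ G.Adj u v := by
    intro u v w
    induction w with
    | nil => exact Or.inl rfl
    | cons h' p ih =>
      rename_i u' v' w'
      rcases ih with rfl | hbj
      · exact Or.inr h'
      · rcases eq_or_ne u' w' with rfl | hne
        · exact Or.inl rfl
        · exact Or.inr (key_adj G h _ _ _ h' hbj hne)
  exact (main w).resolve_left hij
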